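/- For every real number α with 0 ≤ α < 1, the set of leaders n with δ(n) ≤ α is finite. -/
import Mathlib


/-- `CpxW n k` : the positive integer `n` can be written using exactly `k` ones,
with an arbitrary combination of additions and multiplications. -/
inductive CpxW : ℕ → ℕ → Prop
  | one : CpxW 1 1
  | add {a b m n : ℕ} : CpxW a m → CpxW b n → CpxW (a + b) (m + n)
  | mul {a b m n : ℕ} : CpxW a m → CpxW b n → CpxW (a * b) (m + n)

/-- The integer complexity `‖n‖`: the least number of 1's needed to write `n`
using additions and multiplications. -/
noncomputable def cpx (n : ℕ) : ℕ := sInf {k | CpxW n k}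

/-- The defect `δ(n) = ‖n‖ - 3 log₃ n`. -/
noncomputable def defect (n : ℕ) : ℝ := (cpx n : ℝ) - 3 * Real.logb 3 (n : ℝ)

/-- `LDP r f C` : `(f, C)` is a low-defect pair of degree `r`; here a low-defect
polynomial of degree `r` is written in the variables `X 0, …, X (r-1)`. -/
inductive LDP : ℕ → MvPolynomial ℕ ℤ → ℕ → Prop
  | const (k C : ℕ) (hk : 0 < k) (hC : cpx k ≤ C) :
      LDP 0 (MvPolynomial.C (k : ℤ)) C
  | mul {r₁ r₂ : ℕ} {f₁ f₂ : MvPolynomial ℕ ℤ} {C₁ C₂ : ℕ} :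
      LDP r₁ f₁ C₁ → LDP r₂ f₂ C₂ →
      LDP (r₁ + r₂) (f₁ * MvPolynomial.rename (· + r₁) f₂) (C₁ + C₂)
  | step {r : ℕ} {f : MvPolynomial ℕ ℤ} {C : ℕ} (c D : ℕ) (hc : 0 < c) (hD : cpx c ≤ D) :
      LDP r f C → LDP (r + 1) (f * MvPolynomial.X r + MvPolynomial.C (c : ℤ)) (C + D)

/-- A low-defect polynomial: the first component of some low-defect pair. -/
def LowDefectPoly (f : MvPolynomial ℕ ℤ) : Prop := ∃ r C, LDP r f C

/-- The leading coefficient of a low-defect polynomial of degree `r`: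
the coefficient of `x₁ ⋯ x_r`. -/
noncomputable def leadCoeff (r : ℕ) (f : MvPolynomial ℕ ℤ) : ℤ :=
  MvPolynomial.coeff (∑ i ∈ Finset.range r, Finsupp.single i 1) f

/-- The defect `δ(f,C) = C - 3 log₃ a` of a low-defect pair of degree `r`,
where `a` is the leading coefficient. -/
noncomputable def pairDft (r : ℕ) (f : MvPolynomial ℕ ℤ) (C : ℕ) : ℝ :=
  (C : ℝ) - 3 * Real.logb 3 ((leadCoeff r f : ℤ) : ℝ)

/-- `f(3^{k₁}, …, 3^{k_r})` for a polynomial of degree `r`. -/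
noncomputable def eval3 (r : ℕ) (f : MvPolynomial ℕ ℤ) (k : ℕ → ℕ) : ℤ :=
  MvPolynomial.eval (fun i => if i < r then (3 : ℤ) ^ (k i) else 1) f

/-- `δ_{f,C}(k₁,…,k_r) = C + 3(k₁+⋯+k_r) - 3 log₃ f(3^{k₁},…,3^{k_r})`. -/
noncomputable def dftF (r : ℕ) (f : MvPolynomial ℕ ℤ) (C : ℕ) (k : ℕ → ℕ) : ℝ :=
  (C : ℝ) + 3 * (∑ i ∈ Finset.range r, (k i : ℝ))
    - 3 * Real.logb 3 ((eval3 r f k : ℤ) : ℝ)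

/-- The nesting order: `NestLe f i j` means `xᵢ ⪯ xⱼ`, i.e. every monomial of `f`
divisible by `xᵢ` is divisible by `xⱼ`. -/
def NestLe (f : MvPolynomial ℕ ℤ) (i j : ℕ) : Prop :=
  ∀ m ∈ f.support, m i ≠ 0 → m j ≠ 0

/-- `xᵢ` is a variable of (the degree-`r` polynomial) `f` that is minimal with
respect to the nesting order. -/
def IsMinVar (r : ℕ) (f : MvPolynomial ℕ ℤ) (i : ℕ) : Prop :=
  i < r ∧ ∀ j < r, NestLe f j i → NestLe f i j

/-- Substituting `3^k` for the variable `xᵢ` of `f`, renumbering the later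
variables down by one. -/
noncomputable def truncAt (f : MvPolynomial ℕ ℤ) (i k : ℕ) : MvPolynomial ℕ ℤ :=
  MvPolynomial.aeval (fun j => if j < i then MvPolynomial.X j
    else if j = i then MvPolynomial.C ((3 : ℤ) ^ k) else MvPolynomial.X (j - 1)) f

/-- A direct truncation of a "pair with degree" `(r, f, C)`: substitute `3^k`
into a variable of `f` minimal in the nesting order. -/
def DirectTrunc (a b : ℕ × MvPolynomial ℕ ℤ × ℕ) : Prop :=
  ∃ i k : ℕ, a.1 = b.1 + 1 ∧ IsMinVar a.1 a.2.1 i ∧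
    b.2.1 = truncAt a.2.1 i k ∧ b.2.2 = a.2.2 + 3 * k

/-- `n` is a leader: either `3 ∤ n`, or `3 ∣ n` and `‖n‖ < ‖n/3‖ + 3`. -/
def IsLeader (n : ℕ) : Prop := 0 < n ∧ (3 ∣ n → cpx n < cpx (n / 3) + 3)

/-- `(f, C)` (of degree `r`) efficiently 3-represents `n`. -/
def EffRep (r : ℕ) (f : MvPolynomial ℕ ℤ) (C : ℕ) (n : ℕ) : Prop :=
  ∃ k : ℕ → ℕ, (n : ℤ) = eval3 r f k ∧ cpx n = C + 3 * ∑ i ∈ Finset.range r, k i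

/-- The number of `∗`-entries (free coordinates) of `p` among `0, …, r-1`. -/
def starCount (r : ℕ) (p : ℕ → Option ℕ) : ℕ :=
  ((Finset.range r).filter (fun i => p i = none)).card

/-- The 3-substitution of a tuple `p ∈ (ℤ≥0 ∪ {∗})^r` into `f`: substitute
`3^{kᵢ}` for `xᵢ` whenever `p i = some kᵢ`, renumbering the surviving variables
in increasing order. -/
noncomputable def subst3 (f : MvPolynomial ℕ ℤ) (p : ℕ → Option ℕ) : MvPolynomial ℕ ℤ :=
  MvPolynomial.aeval (fun j =>
    match p j with
    | some k => MvPolynomial.C ((3 : ℤ) ^ k)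
    | none => MvPolynomial.X (((Finset.range j).filter (fun i => p i = none)).card)) f

/-- The insertion map `ι` associated to `p`: inserts the arguments into the
coordinates of `p` equal to `∗`. -/
def iotaMap (p : ℕ → Option ℕ) (ℓ : ℕ → ℕ) : ℕ → ℕ := fun j =>
  match p j with
  | some k => k
  | none => ℓ (((Finset.range j).filter (fun i => p i = none)).card)

lemma cpxW_pos {n k : ℕ} (h : CpxW n k) : 1 ≤ n ∧ 1 ≤ k := by
  induction h with
  | one => exact ⟨le_refl _, le_refl _⟩
  | add _ _ ih1 ih2 => exact ⟨le_add_right ih1.1, le_add_right ih1.2⟩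
  | mul _ _ ih1 ih2 => exact ⟨Nat.one_le_iff_ne_zero.2 (Nat.mul_ne_zero (by omega) (by omega)), le_add_right ih1.2⟩

lemma cpxW_self {n : ℕ} (h : 1 ≤ n) : CpxW n n := by
  induction n with
  | zero => omega
  | succ m ih =>
    rcases Nat.eq_or_lt_of_le h with h1 | h1
    · rw [← h1]; exact CpxW.one
    · exact CpxW.add (ih (by omega)) CpxW.one

lemma cpx_le {n k : ℕ} (h : CpxW n k) : cpx n ≤ k := Nat.sInf_le h

lemma cpx_mem {n : ℕ} (h : 1 ≤ n) : CpxW n (cpx n) := Nat.sInf_mem ⟨n, cpxW_self h⟩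

lemma cpx_pos {n : ℕ} (h : 1 ≤ n) : 1 ≤ cpx n := (cpxW_pos (cpx_mem h)).2

lemma cpx_add_le {a b : ℕ} (ha : 1 ≤ a) (hb : 1 ≤ b) : cpx (a + b) ≤ cpx a + cpx b :=
  cpx_le (CpxW.add (cpx_mem ha) (cpx_mem hb))

lemma cpx_mul_le {a b : ℕ} (ha : 1 ≤ a) (hb : 1 ≤ b) : cpx (a * b) ≤ cpx a + cpx b :=
  cpx_le (CpxW.mul (cpx_mem ha) (cpx_mem hb))

lemma cpx_three : cpx 3 ≤ 3 := by
  have : CpxW 3 3 := cpxW_self (by norm_num)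
  exact cpx_le this

lemma cpx_pow3_mul {j c : ℕ} (hc : 1 ≤ c) : cpx (3 ^ j * c) ≤ 3 * j + cpx c := by
  induction j with
  | zero => simp
  | succ i ih =>
    have h3 : (3:ℕ) ^ (i+1) * c = 3 * (3 ^ i * c) := by ring
    rw [h3]
    calc cpx (3 * (3 ^ i * c)) ≤ cpx 3 + cpx (3 ^ i * c) :=
          cpx_mul_le (by norm_num) (Nat.one_le_iff_ne_zero.2 (Nat.mul_ne_zero (by positivity) (by omega)))
      _ ≤ 3 + (3 * i + cpx c) := by have := cpx_three; omega
      _ = 3 * (i+1) + cpx c := by ring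

def E : ℕ → ℕ
  | 0 => 0
  | 1 => 1
  | 2 => 2
  | 3 => 3
  | 4 => 4
  | 5 => 6
  | 6 => 9
  | n+7 => 3 * E (n+4)

def E2 : ℕ → ℕ
  | 0 => 0
  | 1 => 0
  | 2 => 2
  | 3 => 2
  | 4 => 4
  | 5 => 6
  | 6 => 8
  | n+7 => 3 * E2 (n+4)

lemma E_step {k : ℕ} (h : 7 ≤ k) : E k = 3 * E (k-3) := by
  obtain ⟨n, rfl⟩ : ∃ n, k = n + 7 := ⟨k - 7, by omega⟩
  show E (n+7) = 3 * E (n+4)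
  rfl

lemma E2_step {k : ℕ} (h : 7 ≤ k) : E2 k = 3 * E2 (k-3) := by
  obtain ⟨n, rfl⟩ : ∃ n, k = n + 7 := ⟨k - 7, by omega⟩
  show E2 (n+7) = 3 * E2 (n+4)
  rfl

lemma E_add (a b : ℕ) : E a + E b ≤ E (a + b) := by
  have H : ∀ n, ∀ a b : ℕ, a + b ≤ n → E a + E b ≤ E (a + b) := by
    intro n
    induction n using Nat.strong_induction_on with
    | _ n ih =>
    intro a b hn
    rcases le_or_gt a 6 with ha | ha
    · rcases le_or_gt b 6 with hb | hb
      · interval_cases a <;> interval_cases b <;> decide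
      · have h1 : E b = 3 * E (b - 3) := E_step (by omega)
        have h2 : E (a + b) = 3 * E (a + b - 3) := E_step (by omega)
        have h3 : a + (b - 3) = a + b - 3 := by omega
        have := h3 ▸ ih (a + b - 3) (by omega) a (b - 3) (by omega)
        calc E a + E b = E a + 3 * E (b-3) := by rw [h1]
          _ ≤ 3 * (E a + E (b-3)) := by omega
          _ ≤ 3 * E (a + b - 3) := by omega
          _ = E (a+b) := h2.symm
    · have h1 : E a = 3 * E (a - 3) := E_step (by omega)
      have h2 : E (a + b) = 3 * E (a + b - 3) := E_step (by omega)
      have h3 : (a - 3) + b = a + b - 3 := by omega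
      have := h3 ▸ ih (a + b - 3) (by omega) (a-3) b (by omega)
      calc E a + E b = 3 * E (a-3) + E b := by rw [h1]
        _ ≤ 3 * (E (a-3) + E b) := by omega
        _ ≤ 3 * E (a + b - 3) := by omega
        _ = E (a+b) := h2.symm
  exact H (a+b) a b (by omega)

lemma E_mul (a b : ℕ) : E a * E b ≤ E (a + b) := by
  have H : ∀ n, ∀ a b : ℕ, a + b ≤ n → E a * E b ≤ E (a + b) := by
    intro n
    induction n using Nat.strong_induction_on with
    | _ n ih =>
    intro a b hn
    rcases le_or_gt a 6 with ha | ha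
    · rcases le_or_gt b 6 with hb | hb
      · interval_cases a <;> interval_cases b <;> decide
      · have h1 : E b = 3 * E (b - 3) := E_step (by omega)
        have h2 : E (a + b) = 3 * E (a + b - 3) := E_step (by omega)
        have h3 : a + (b - 3) = a + b - 3 := by omega
        have := h3 ▸ ih (a + b - 3) (by omega) a (b - 3) (by omega)
        calc E a * E b = 3 * (E a * E (b-3)) := by rw [h1]; ring
          _ ≤ 3 * E (a + b - 3) := by omega
          _ = E (a+b) := h2.symm
    · have h1 : E a = 3 * E (a - 3) := E_step (by omega)
      have h2 : E (a + b) = 3 * E (a + b - 3) := E_step (by omega)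
      have h3 : (a - 3) + b = a + b - 3 := by omega
      have := h3 ▸ ih (a + b - 3) (by omega) (a-3) b (by omega)
      calc E a * E b = 3 * (E (a-3) * E b) := by rw [h1]; ring
        _ ≤ 3 * E (a + b - 3) := by omega
        _ = E (a+b) := h2.symm
  exact H (a+b) a b (by omega)

lemma E2_add {a b : ℕ} (ha : 1 ≤ a) (hb : 1 ≤ b) (hab : a + b ≠ 3) :
    E a + E b ≤ E2 (a + b) := by
  have H : ∀ n, ∀ a b : ℕ, 1 ≤ a → 1 ≤ b → a + b ≠ 3 → a + b ≤ n →
      E a + E b ≤ E2 (a + b) := by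
    intro n
    induction n using Nat.strong_induction_on with
    | _ n ih =>
    intro a b ha hb hab hn
    rcases le_or_gt a 6 with ha6 | ha6
    · rcases le_or_gt b 6 with hb6 | hb6
      · interval_cases a <;> interval_cases b <;> first | omega | decide
      · have h1 : E b = 3 * E (b - 3) := E_step (by omega)
        have h2 : E2 (a + b) = 3 * E2 (a + b - 3) := E2_step (by omega)
        have h3 : a + (b - 3) = a + b - 3 := by omega
        have := h3 ▸ ih (a + b - 3) (by omega) a (b - 3) ha (by omega) (by omega) (by omega)
        calc E a + E b = E a + 3 * E (b-3) := by rw [h1]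
          _ ≤ 3 * (E a + E (b-3)) := by omega
          _ ≤ 3 * E2 (a + b - 3) := by omega
          _ = E2 (a+b) := h2.symm
    · have h1 : E a = 3 * E (a - 3) := E_step (by omega)
      have h2 : E2 (a + b) = 3 * E2 (a + b - 3) := E2_step (by omega)
      have h3 : (a - 3) + b = a + b - 3 := by omega
      have := h3 ▸ ih (a + b - 3) (by omega) (a-3) b (by omega) hb (by omega) (by omega)
      calc E a + E b = 3 * E (a-3) + E b := by rw [h1]
        _ ≤ 3 * (E (a-3) + E b) := by omega
        _ ≤ 3 * E2 (a + b - 3) := by omega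
        _ = E2 (a+b) := h2.symm
  exact H (a+b) a b ha hb hab (by omega)

lemma E2_mul (a b : ℕ) : E2 a * E b ≤ E2 (a + b) := by
  have H : ∀ n, ∀ a b : ℕ, a + b ≤ n → E2 a * E b ≤ E2 (a + b) := by
    intro n
    induction n using Nat.strong_induction_on with
    | _ n ih =>
    intro a b hn
    rcases le_or_gt a 6 with ha6 | ha6
    · rcases le_or_gt b 6 with hb6 | hb6
      · interval_cases a <;> interval_cases b <;> decide
      · have h1 : E b = 3 * E (b - 3) := E_step (by omega)
        have h2 : E2 (a + b) = 3 * E2 (a + b - 3) := E2_step (by omega)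
        have h3 : a + (b - 3) = a + b - 3 := by omega
        have := h3 ▸ ih (a + b - 3) (by omega) a (b - 3) (by omega)
        calc E2 a * E b = 3 * (E2 a * E (b-3)) := by rw [h1]; ring
          _ ≤ 3 * E2 (a + b - 3) := by omega
          _ = E2 (a+b) := h2.symm
    · have h1 : E2 a = 3 * E2 (a - 3) := E2_step (by omega)
      have h2 : E2 (a + b) = 3 * E2 (a + b - 3) := E2_step (by omega)
      have h3 : (a - 3) + b = a + b - 3 := by omega
      have := h3 ▸ ih (a + b - 3) (by omega) (a-3) b (by omega)
      calc E2 a * E b = 3 * (E2 (a-3) * E b) := by rw [h1]; ring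
        _ ≤ 3 * E2 (a + b - 3) := by omega
        _ = E2 (a+b) := h2.symm
  exact H (a+b) a b (by omega)

lemma E_E2_mul (a b : ℕ) : E a * E2 b ≤ E2 (a + b) := by
  have := E2_mul b a
  calc E a * E2 b = E2 b * E a := by ring
    _ ≤ E2 (b + a) := this
    _ = E2 (a + b) := by rw [Nat.add_comm]

lemma E_cube {k : ℕ} (hk : 1 ≤ k) : E k ^ 3 ≤ 3 ^ k := by
  induction k using Nat.strong_induction_on with
  | _ k ih =>
  rcases le_or_gt k 6 with h6 | h6
  · interval_cases k <;> decide
  · have h1 : E k = 3 * E (k - 3) := E_step (by omega)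
    have := ih (k-3) (by omega) (by omega)
    calc E k ^ 3 = 27 * E (k-3) ^ 3 := by rw [h1]; ring
      _ ≤ 27 * 3 ^ (k-3) := by omega
      _ = 3 ^ k := by
          have h : (3:ℕ) ^ k = 3 ^ (k-3) * 3 ^ 3 := by
            rw [← pow_add]; congr 1; omega
          rw [h]; ring

lemma E2_cube {k : ℕ} (hk : 2 ≤ k) : E2 k ^ 3 ≤ 8 * 3 ^ (k - 2) := by
  induction k using Nat.strong_induction_on with
  | _ k ih =>
  rcases le_or_gt k 6 with h6 | h6
  · interval_cases k <;> decide
  · have h1 : E2 k = 3 * E2 (k - 3) := E2_step (by omega)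
    have := ih (k-3) (by omega) (by omega)
    calc E2 k ^ 3 = 27 * E2 (k-3) ^ 3 := by rw [h1]; ring
      _ ≤ 27 * (8 * 3 ^ (k-3-2)) := by omega
      _ = 8 * 3 ^ (k-2) := by
          have h : (3:ℕ) ^ (k-2) = 3 ^ (k-3-2) * 3 ^ 3 := by
            rw [← pow_add]; congr 1; omega
          rw [h]; ring

def IsPow3 (n : ℕ) : Prop := ∃ i : ℕ, n = 3 ^ i

lemma cpxW_le_E {n k : ℕ} (h : CpxW n k) : n ≤ E k := by
  induction h with
  | one => decide
  | @add a b m m' wa wb iha ihb =>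
      exact le_trans (Nat.add_le_add iha ihb) (E_add m m')
  | @mul a b m m' wa wb iha ihb =>
      exact le_trans (Nat.mul_le_mul iha ihb) (E_mul m m')

lemma cpxW_le_E2 {n k : ℕ} (h : CpxW n k) (hn : ¬ IsPow3 n) : n ≤ E2 k := by
  induction h with
  | one => exact absurd ⟨0, rfl⟩ hn
  | @add a b m m' wa wb iha ihb =>
      have hm : 1 ≤ m := (cpxW_pos wa).2
      have hm' : 1 ≤ m' := (cpxW_pos wb).2
      by_cases hmm : m + m' = 3
      · have h1 : a + b ≤ E (m + m') := le_trans (Nat.add_le_add (cpxW_le_E wa) (cpxW_le_E wb)) (E_add m m')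
        rw [hmm] at h1
        have h2 : a + b ≠ 3 := fun h => hn ⟨1, by omega⟩
        have : E (3:ℕ) = 3 := by decide
        rw [hmm]
        have : E2 (3:ℕ) = 2 := by decide
        omega
      · exact le_trans (Nat.add_le_add (cpxW_le_E wa) (cpxW_le_E wb)) (E2_add hm hm' hmm)
  | @mul a b m m' wa wb iha ihb =>
      have : ¬ IsPow3 a ∨ ¬ IsPow3 b := by
        by_contra hc
        push_neg at hc
        obtain ⟨⟨i, hi⟩, ⟨j, hj⟩⟩ := hc
        exact hn ⟨i + j, by rw [hi, hj, pow_add]⟩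
      rcases this with h | h
      · exact le_trans (Nat.mul_le_mul (iha h) (cpxW_le_E wb)) (E2_mul m m')
      · exact le_trans (Nat.mul_le_mul (cpxW_le_E wa) (ihb h)) (E_E2_mul m m')

lemma cube_le_pow3 {n : ℕ} (hn : 1 ≤ n) : n ^ 3 ≤ 3 ^ cpx n :=
  le_trans (Nat.pow_le_pow_left (cpxW_le_E (cpx_mem hn)) 3) (E_cube (cpx_pos hn))

lemma cpx_two_le {n : ℕ} (hn : 2 ≤ n) : 2 ≤ cpx n := by
  rcases Nat.lt_or_ge (cpx n) 2 with h | h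
  · have h1 : 1 ≤ cpx n := cpx_pos (by omega)
    have h2 : cpx n = 1 := by omega
    have := cpxW_le_E (cpx_mem (show 1 ≤ n by omega))
    rw [h2] at this
    simp [E] at this
    omega
  · exact h

lemma cube_le_pow3' {n : ℕ} (hn : 2 ≤ n) (h : ¬ IsPow3 n) :
    n ^ 3 ≤ 8 * 3 ^ (cpx n - 2) :=
  le_trans (Nat.pow_le_pow_left (cpxW_le_E2 (cpx_mem (by omega)) h) 3) (E2_cube (cpx_two_le hn))

lemma logb3_pow3 (k : ℕ) : Real.logb 3 ((3:ℝ) ^ k) = k := by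
  rw [Real.logb_pow, Real.logb_self_eq_one (by norm_num)]
  ring

lemma defect_nonneg {n : ℕ} (hn : 1 ≤ n) : 0 ≤ defect n := by
  have h := cube_le_pow3 hn
  have hcast : ((n : ℝ)) ^ 3 ≤ (3:ℝ) ^ cpx n := by exact_mod_cast h
  have hnpos : (0:ℝ) < (n:ℝ) := by exact_mod_cast hn
  have hlog : Real.logb 3 ((n:ℝ) ^ 3) ≤ Real.logb 3 ((3:ℝ) ^ cpx n) :=
    Real.logb_le_logb_of_le (by norm_num) (by positivity) hcast
  rw [Real.logb_pow, logb3_pow3] at hlog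
  push_cast at hlog
  unfold defect
  linarith

lemma defect_ge_d0 {n : ℕ} (hn : 2 ≤ n) (h : ¬ IsPow3 n) :
    2 - 3 * Real.logb 3 2 ≤ defect n := by
  have hk2 : 2 ≤ cpx n := cpx_two_le hn
  have h1 := cube_le_pow3' hn h
  have hcast : ((n : ℝ)) ^ 3 ≤ (2:ℝ) ^ 3 * (3:ℝ) ^ (cpx n - 2) := by
    have : ((8 * 3 ^ (cpx n - 2) : ℕ) : ℝ) = (2:ℝ)^3 * (3:ℝ) ^ (cpx n - 2) := by
      push_cast; ring
    rw [← this]; exact_mod_cast h1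
  have hnpos : (0:ℝ) < (n:ℝ) := by positivity
  have hlog : Real.logb 3 ((n:ℝ) ^ 3) ≤ Real.logb 3 ((2:ℝ)^3 * (3:ℝ) ^ (cpx n - 2)) :=
    Real.logb_le_logb_of_le (by norm_num) (by positivity) hcast
  rw [Real.logb_pow, Real.logb_mul (by norm_num) (by positivity), Real.logb_pow,
    logb3_pow3] at hlog
  have hsub : ((cpx n - 2 : ℕ) : ℝ) = (cpx n : ℝ) - 2 := by
    rw [Nat.cast_sub hk2]; norm_num
  rw [hsub] at hlog
  push_cast at hlog
  unfold defect
  linarith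

lemma logb3_two_lt : 3 * Real.logb 3 2 < 2 := by
  have h : Real.logb 3 8 < Real.logb 3 9 :=
    Real.logb_lt_logb (by norm_num) (by norm_num) (by norm_num)
  have h8 : Real.logb 3 8 = 3 * Real.logb 3 2 := by
    rw [show (8:ℝ) = 2 ^ (3:ℕ) by norm_num, Real.logb_pow]; norm_num
  have h9 : Real.logb 3 9 = 2 := by
    rw [show (9:ℝ) = 3 ^ (2:ℕ) by norm_num, Real.logb_pow,
      Real.logb_self_eq_one (by norm_num)]
    norm_num
  rw [h8, h9] at h
  exact h

lemma one_lt_11_d0 : 1 < 11 * (2 - 3 * Real.logb 3 2) := by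
  have h : Real.logb 3 (2 ^ (33:ℕ)) < Real.logb 3 (3 ^ (21:ℕ)) :=
    Real.logb_lt_logb (by norm_num) (by positivity) (by norm_num)
  rw [Real.logb_pow, Real.logb_pow, Real.logb_self_eq_one (by norm_num)] at h
  push_cast at h
  nlinarith [h]

lemma decomp (n : ℕ) (hn : 1 ≤ n) :
    n = 1 ∨ (∃ a b, n = a + b ∧ 1 ≤ a ∧ 1 ≤ b ∧ cpx n = cpx a + cpx b) ∨
      (∃ a b, n = a * b ∧ 2 ≤ a ∧ 2 ≤ b ∧ cpx n = cpx a + cpx b) := by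
  have w := cpx_mem hn
  generalize hk : cpx n = k at w
  cases w with
  | one => exact Or.inl rfl
  | @add a b m m' wa wb =>
    refine Or.inr (Or.inl ⟨a, b, rfl, (cpxW_pos wa).1, (cpxW_pos wb).1, ?_⟩)
    have h1 : cpx a ≤ m := cpx_le wa
    have h2 : cpx b ≤ m' := cpx_le wb
    have h3 : cpx (a + b) ≤ cpx a + cpx b := cpx_add_le (cpxW_pos wa).1 (cpxW_pos wb).1
    omega
  | @mul a b m m' wa wb =>
    have ha1 : 1 ≤ a := (cpxW_pos wa).1
    have hb1 : 1 ≤ b := (cpxW_pos wb).1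
    have h1 : cpx a ≤ m := cpx_le wa
    have h2 : cpx b ≤ m' := cpx_le wb
    have h3 : cpx (a * b) ≤ cpx a + cpx b := cpx_mul_le ha1 hb1
    have hm : 1 ≤ m := (cpxW_pos wa).2
    have hm' : 1 ≤ m' := (cpxW_pos wb).2
    have ha2 : 2 ≤ a := by
      rcases Nat.lt_or_ge a 2 with h | h
      · exfalso
        have : a = 1 := by omega
        subst this
        rw [one_mul] at hk h3
        omega
      · exact h
    have hb2 : 2 ≤ b := by
      rcases Nat.lt_or_ge b 2 with h | h
      · exfalso
        have : b = 1 := by omega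
        subst this
        rw [mul_one] at hk h3
        omega
      · exact h
    exact Or.inr (Or.inr ⟨a, b, rfl, ha2, hb2, by omega⟩)

lemma defect_mul {a b : ℕ} (ha : 1 ≤ a) (hb : 1 ≤ b)
    (hsum : cpx (a * b) = cpx a + cpx b) : defect (a * b) = defect a + defect b := by
  unfold defect
  rw [hsum, Nat.cast_mul,
    Real.logb_mul (by positivity) (by positivity)]
  push_cast
  ring

lemma factor_leader {a b : ℕ} (ha : 2 ≤ a) (hb : 2 ≤ b)
    (hsum : cpx (a * b) = cpx a + cpx b) (hL : IsLeader (a * b)) :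
    IsLeader a ∧ ¬ IsPow3 a := by
  constructor
  · by_contra hcon
    unfold IsLeader at hcon
    push_neg at hcon
    obtain ⟨hdvd, hge⟩ := hcon (by omega)
    obtain ⟨t, rfl⟩ := hdvd
    have ht1 : 1 ≤ t := by omega
    have hdiv : (3 * t) / 3 = t := by omega
    rw [hdiv] at hge
    have hdvdn : 3 ∣ 3 * t * b := ⟨t * b, by ring⟩
    have hdivn : (3 * t * b) / 3 = t * b := by
      rw [mul_assoc, Nat.mul_div_cancel_left _ (by norm_num)]
    have h1 : cpx (t * b) ≤ cpx t + cpx b := cpx_mul_le ht1 (by omega)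
    have h2 := hL.2 hdvdn
    rw [hdivn] at h2
    omega
  · rintro ⟨i, rfl⟩
    obtain ⟨j, rfl⟩ : ∃ j, i = j + 1 := by
      refine ⟨i - 1, ?_⟩
      rcases Nat.eq_zero_or_pos i with h | h
      · subst h; simp at ha
      · omega
    have hcpx3 : 3 * (j + 1) ≤ cpx (3 ^ (j+1)) := by
      have hd := defect_nonneg (n := 3 ^ (j+1)) (Nat.one_le_pow _ _ (by norm_num))
      unfold defect at hd
      have hcast : ((3 ^ (j+1) : ℕ) : ℝ) = (3:ℝ) ^ (j+1) := by push_cast; ring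
      rw [hcast, logb3_pow3] at hd
      push_cast at hd
      have : ((3 * (j+1) : ℕ) : ℝ) ≤ (cpx (3 ^ (j+1)) : ℝ) := by push_cast; linarith
      exact_mod_cast this
    have hdvdn : 3 ∣ 3 ^ (j+1) * b := ⟨3 ^ j * b, by ring⟩
    have hdivn : (3 ^ (j+1) * b) / 3 = 3 ^ j * b := by
      have : 3 ^ (j+1) * b = 3 * (3 ^ j * b) := by ring
      rw [this, Nat.mul_div_cancel_left _ (by norm_num)]
    have h1 : cpx (3 ^ j * b) ≤ 3 * j + cpx b := cpx_pow3_mul (by omega)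
    have h2 := hL.2 hdvdn
    rw [hdivn] at h2
    omega

lemma addCase {α : ℝ} (h1 : α < 1) {a b : ℕ} (ha : 1 ≤ a) (hb : 1 ≤ b)
    (hba : b ≤ a) (hsum : cpx (a + b) = cpx a + cpx b) (hd : defect (a + b) ≤ α) :
    ((a + b : ℕ) : ℝ) ≤ 2 / ((3:ℝ) ^ ((1 - α)/3) - 1) + 2 := by
  have hapos : (0:ℝ) < (a:ℝ) := by exact_mod_cast ha
  have hbpos : (0:ℝ) < (b:ℝ) := by exact_mod_cast hb
  have hbar : (b:ℝ) ≤ (a:ℝ) := by exact_mod_cast hba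
  have hd' : (cpx a : ℝ) + (cpx b : ℝ) - 3 * Real.logb 3 ((a:ℝ) + (b:ℝ)) ≤ α := by
    unfold defect at hd
    rw [hsum] at hd
    push_cast at hd
    linarith
  have hda := defect_nonneg ha
  unfold defect at hda
  have key1 : (cpx b : ℝ) ≤ α + 3 * (Real.logb 3 ((a:ℝ)+(b:ℝ)) - Real.logb 3 (a:ℝ)) := by
    linarith
  have hmono1 : Real.logb 3 ((a:ℝ)+(b:ℝ)) ≤ Real.logb 3 (2 * (a:ℝ)) :=
    Real.logb_le_logb_of_le (by norm_num) (by positivity) (by linarith)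
  have h2a : Real.logb 3 (2*(a:ℝ)) = Real.logb 3 2 + Real.logb 3 (a:ℝ) :=
    Real.logb_mul (by norm_num) (ne_of_gt hapos)
  have hlog2 := logb3_two_lt
  have hcb3 : (cpx b : ℝ) < 3 := by
    rw [h2a] at hmono1
    linarith
  have hcb2 : cpx b ≤ 2 := by
    have h' : cpx b < 3 := by exact_mod_cast hcb3
    omega
  have hb2 : b ≤ 2 := by
    have hbE := cpxW_le_E (cpx_mem hb)
    have h1b := cpx_pos hb
    have : cpx b = 1 ∨ cpx b = 2 := by omega
    rcases this with h | h
    · rw [h, show E 1 = 1 from rfl] at hbE; omega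
    · rw [h, show E 2 = 2 from rfl] at hbE; exact hbE
  have hb2r : (b:ℝ) ≤ 2 := by exact_mod_cast hb2
  have hmono2 : Real.logb 3 ((a:ℝ)+(b:ℝ)) ≤ Real.logb 3 ((a:ℝ)+2) :=
    Real.logb_le_logb_of_le (by norm_num) (by positivity) (by linarith)
  have hcb1 : (1:ℝ) ≤ (cpx b : ℝ) := by exact_mod_cast cpx_pos hb
  have hdiv : Real.logb 3 (((a:ℝ)+2)/(a:ℝ)) = Real.logb 3 ((a:ℝ)+2) - Real.logb 3 (a:ℝ) :=
    Real.logb_div (by positivity) (ne_of_gt hapos)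
  have key2 : (1-α)/3 ≤ Real.logb 3 (((a:ℝ)+2)/(a:ℝ)) := by
    rw [hdiv]
    linarith
  have hquot : (3:ℝ) ^ ((1-α)/3) ≤ ((a:ℝ)+2)/(a:ℝ) :=
    (Real.le_logb_iff_rpow_le (by norm_num) (by positivity)).mp key2
  have hmul : (3:ℝ)^((1-α)/3) * (a:ℝ) ≤ (a:ℝ) + 2 :=
    (le_div_iff₀ hapos).mp hquot
  have hden : (0:ℝ) < 3^((1-α)/3) - 1 := by
    have h3 : (3:ℝ)^(0:ℝ) < (3:ℝ) ^ ((1-α)/3) :=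
      (Real.rpow_lt_rpow_left_iff (by norm_num)).mpr (by linarith)
    rw [Real.rpow_zero] at h3
    linarith
  have hA : (a:ℝ) ≤ 2 / (3^((1-α)/3) - 1) := by
    rw [le_div_iff₀ hden]
    nlinarith
  push_cast
  linarith

lemma main_bound {α : ℝ} (h0 : 0 ≤ α) (h1 : α < 1) (s : ℕ) :
    ∀ n : ℕ, IsLeader n → defect n ≤ α →
      defect n < ((s:ℝ)+1) * (2 - 3*Real.logb 3 2) →
      (n:ℝ) ≤ (2 / ((3:ℝ)^((1-α)/3) - 1) + 2) ^ (2 ^ s) := by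
  have hden : (0:ℝ) < 3^((1-α)/3) - 1 := by
    have h3 : (3:ℝ)^(0:ℝ) < (3:ℝ) ^ ((1-α)/3) :=
      (Real.rpow_lt_rpow_left_iff (by norm_num)).mpr (by linarith)
    rw [Real.rpow_zero] at h3
    linarith
  have hbase : (1:ℝ) ≤ 2 / ((3:ℝ)^((1-α)/3) - 1) + 2 := by
    have : (0:ℝ) ≤ 2 / ((3:ℝ)^((1-α)/3) - 1) := by positivity
    linarith
  have hd0pos : (0:ℝ) < 2 - 3 * Real.logb 3 2 := by
    have := logb3_two_lt
    linarith
  induction s with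
  | zero =>
    intro n hL hd hds
    rcases decomp n hL.1 with rfl | ⟨a,b,rfl,ha,hb,hsum⟩ | ⟨a,b,rfl,ha,hb,hsum⟩
    · simpa using hbase
    · rcases le_total b a with hba | hab
      · have h := addCase h1 ha hb hba hsum hd
        calc ((a+b:ℕ):ℝ) ≤ 2 / ((3:ℝ)^((1-α)/3) - 1) + 2 := h
          _ = _ := by norm_num
      · have hsum' : cpx (b + a) = cpx b + cpx a := by
          rw [Nat.add_comm b a, hsum]; omega
        have hd' : defect (b + a) ≤ α := by rwa [Nat.add_comm b a]
        have h := addCase h1 hb ha hab hsum' hd'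
        have : ((a+b:ℕ):ℝ) = ((b+a:ℕ):ℝ) := by rw [Nat.add_comm]
        rw [this]
        calc ((b+a:ℕ):ℝ) ≤ 2 / ((3:ℝ)^((1-α)/3) - 1) + 2 := h
          _ = _ := by norm_num
    · exfalso
      have hfa := factor_leader ha hb hsum hL
      have hsum' : cpx (b * a) = cpx b + cpx a := by rw [Nat.mul_comm b a, hsum]; omega
      have hL' : IsLeader (b * a) := by rwa [Nat.mul_comm b a]
      have hfb := factor_leader hb ha hsum' hL'
      have hdm := defect_mul (by omega) (by omega) hsum
      have hda0 := defect_ge_d0 ha hfa.2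
      have hdb0 := defect_ge_d0 hb hfb.2
      push_cast at hds
      linarith
  | succ s ih =>
    intro n hL hd hds
    rcases decomp n hL.1 with rfl | ⟨a,b,rfl,ha,hb,hsum⟩ | ⟨a,b,rfl,ha,hb,hsum⟩
    · exact_mod_cast one_le_pow₀ hbase
    · have hpow : 2 ^ (s+1) ≠ 0 := by positivity
      rcases le_total b a with hba | hab
      · exact le_trans (addCase h1 ha hb hba hsum hd) (le_self_pow₀ hbase hpow)
      · have hsum' : cpx (b + a) = cpx b + cpx a := by
          rw [Nat.add_comm b a, hsum]; omega
        have hd' : defect (b + a) ≤ α := by rwa [Nat.add_comm b a]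
        have h := addCase h1 hb ha hab hsum' hd'
        have heq : ((a+b:ℕ):ℝ) = ((b+a:ℕ):ℝ) := by rw [Nat.add_comm]
        rw [heq]
        exact le_trans h (le_self_pow₀ hbase hpow)
    · have hfa := factor_leader ha hb hsum hL
      have hsum' : cpx (b * a) = cpx b + cpx a := by rw [Nat.mul_comm b a, hsum]; omega
      have hL' : IsLeader (b * a) := by rwa [Nat.mul_comm b a]
      have hfb := factor_leader hb ha hsum' hL'
      have hdm := defect_mul (by omega) (by omega) hsum
      have hda0 := defect_ge_d0 ha hfa.2
      have hdb0 := defect_ge_d0 hb hfb.2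
      have hdslt : defect a + defect b < ((s:ℝ)+1+1) * (2 - 3*Real.logb 3 2) := by
        rw [← hdm]
        push_cast at hds ⊢
        linarith
      have hda : defect a < ((s:ℝ)+1) * (2 - 3*Real.logb 3 2) := by nlinarith
      have hdb : defect b < ((s:ℝ)+1) * (2 - 3*Real.logb 3 2) := by nlinarith
      have hdale : defect a ≤ α := by
        rw [hdm] at hd
        linarith
      have hdble : defect b ≤ α := by
        rw [hdm] at hd
        linarith
      have hra := ih a hfa.1 hdale hda
      have hrb := ih b hfb.1 hdble hdb
      have hbnn : (0:ℝ) ≤ (b:ℝ) := by positivity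
      have hannB : (0:ℝ) ≤ (2 / ((3:ℝ)^((1-α)/3) - 1) + 2) ^ (2^s) := by positivity
      calc ((a*b:ℕ):ℝ) = (a:ℝ) * (b:ℝ) := by push_cast; ring
        _ ≤ (2 / ((3:ℝ)^((1-α)/3) - 1) + 2) ^ (2^s) * (2 / ((3:ℝ)^((1-α)/3) - 1) + 2) ^ (2^s) :=
            mul_le_mul hra hrb hbnn hannB
        _ = (2 / ((3:ℝ)^((1-α)/3) - 1) + 2) ^ (2^(s+1)) := by
            rw [← pow_add]
            congr 1
            rw [pow_succ]
            ring


/-- For `0 ≤ α < 1`, the set of leaders of defect at most `α`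
is finite. -/
theorem leaders_below_one_finite (α : ℝ) (h0 : 0 ≤ α) (h1 : α < 1) :
    {n : ℕ | IsLeader n ∧ defect n ≤ α}.Finite := by
  apply Set.Finite.subset
    (Set.finite_Iic (⌊(2 / ((3:ℝ)^((1-α)/3) - 1) + 2) ^ (2 ^ 10 : ℕ)⌋₊))
  rintro n ⟨hL, hd⟩
  simp only [Set.mem_Iic]
  apply Nat.le_floor
  apply main_bound h0 h1 10 n hL hd
  have h11 := one_lt_11_d0
  push_cast
  linarith
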